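/- For every Y ∈ (0,1) the second derivative of G is G''(Y) = 1/5 + (4/15)·(3/5 + (2/5)·Y^{5/3})^{-7/5}·Y^{4/3} - (2/3)·(3/5 + (2/5)·Y^{5/3})^{-2/5}·Y^{-1/3}, and it satisfies G''(Y) ≤ 1/2 - 2/3 < 0; in particular G is strictly concave on (0,1). -/

import Mathlib

/-- `G(Y) = Y + 3/2 - (5/2)·(3/5 + (2/5)·Y^{5/3})^{3/5} + (1/10)·(Y - 1)²`. -/
noncomputable def Gfun (Y : ℝ) : ℝ :=
  Y + 3 / 2 - (5 / 2) * (3 / 5 + (2 / 5) * Y ^ ((5 : ℝ) / 3)) ^ ((3 : ℝ) / 5) +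
    (1 / 10) * (Y - 1) ^ 2

/-- The first derivative `G'(Y) = 4/5 - (3/5 + (2/5)·Y^{5/3})^{-2/5}·Y^{2/3} + (1/5)·Y`. -/
noncomputable def G'fun (Y : ℝ) : ℝ :=
  4 / 5 - (3 / 5 + (2 / 5) * Y ^ ((5 : ℝ) / 3)) ^ (-((2 : ℝ) / 5)) * Y ^ ((2 : ℝ) / 3) +
    (1 / 5) * Y

/-- The second derivative
`G''(Y) = 1/5 + (4/15)·(3/5 + (2/5)·Y^{5/3})^{-7/5}·Y^{4/3}
- (2/3)·(3/5 + (2/5)·Y^{5/3})^{-2/5}·Y^{-1/3}`. -/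
noncomputable def G''fun (Y : ℝ) : ℝ :=
  1 / 5 + (4 / 15) * (3 / 5 + (2 / 5) * Y ^ ((5 : ℝ) / 3)) ^ (-((7 : ℝ) / 5)) *
    Y ^ ((4 : ℝ) / 3) -
    (2 / 3) * (3 / 5 + (2 / 5) * Y ^ ((5 : ℝ) / 3)) ^ (-((2 : ℝ) / 5)) *
      Y ^ (-((1 : ℝ) / 3))


lemma upos {Y : ℝ} (hY : 0 < Y) : (0:ℝ) < 3/5 + (2/5) * Y ^ ((5:ℝ)/3) := by positivity

lemma hu_deriv {Y : ℝ} (hY : 0 < Y) :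
    HasDerivAt (fun Y : ℝ => 3/5 + (2/5) * Y ^ ((5:ℝ)/3))
      ((2/5) * ((5/3) * Y ^ ((5:ℝ)/3 - 1))) Y :=
  ((Real.hasDerivAt_rpow_const (Or.inl hY.ne')).const_mul _).const_add _

lemma hG {Y : ℝ} (hY : 0 < Y) : HasDerivAt Gfun (G'fun Y) Y := by
  have hupos := upos hY
  have hu := hu_deriv hY
  have h1 := hu.rpow_const (p := (3:ℝ)/5) (Or.inl hupos.ne')
  have h2 := (((hasDerivAt_id' (x := Y)).add_const (3/2 : ℝ)).sub (h1.const_mul (5/2 : ℝ))).add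
      ((((hasDerivAt_id' (x := Y)).sub_const (1:ℝ)).pow 2).const_mul (1/10 : ℝ))
  refine HasDerivAt.congr_deriv h2 ?_
  unfold G'fun
  rw [show (5:ℝ)/3 - 1 = 2/3 by norm_num, show (3:ℝ)/5 - 1 = -((2:ℝ)/5) by norm_num]
  ring

lemma hG' {Y : ℝ} (hY : 0 < Y) : HasDerivAt G'fun (G''fun Y) Y := by
  have hupos := upos hY
  have hu := hu_deriv hY
  have h1 := hu.rpow_const (p := -((2:ℝ)/5)) (Or.inl hupos.ne')
  have h2 : HasDerivAt (fun Y : ℝ => Y ^ ((2:ℝ)/3)) ((2/3) * Y ^ ((2:ℝ)/3 - 1)) Y :=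
    Real.hasDerivAt_rpow_const (Or.inl hY.ne')
  have h3 := ((hasDerivAt_const Y (4/5:ℝ)).sub (h1.mul h2)).add
      ((hasDerivAt_id' (x := Y)).const_mul (1/5 : ℝ))
  refine HasDerivAt.congr_deriv h3 ?_
  unfold G''fun
  have e3 : Y ^ ((4:ℝ)/3) = Y ^ ((2:ℝ)/3) * Y ^ ((2:ℝ)/3) := by
    rw [← Real.rpow_add hY]; norm_num
  have e4 : (-((2:ℝ)/5) - 1) = -((7:ℝ)/5) := by norm_num
  rw [e3, show (5:ℝ)/3 - 1 = 2/3 by norm_num, show (2:ℝ)/3 - 1 = -((1:ℝ)/3) by norm_num, e4]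
  ring

lemma hIneq {Y : ℝ} (hY : 0 < Y) (hY1 : Y < 1) : G''fun Y ≤ 1/2 - 2/3 := by
  have hupos := upos hY
  set t : ℝ := Y ^ ((5:ℝ)/3) with ht
  set u : ℝ := 3/5 + (2/5) * t with hudef
  have ht0 : 0 < t := Real.rpow_pos_of_pos hY _
  have ht1 : t ≤ 1 := Real.rpow_le_one hY.le hY1.le (by norm_num)
  have hu1 : u ≤ 1 := by rw [hudef]; linarith
  have ha : (1:ℝ) ≤ u ^ (-((2:ℝ)/5)) :=
    Real.one_le_rpow_of_pos_of_le_one_of_nonpos hupos hu1 (by norm_num)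
  have hb : (1:ℝ) ≤ Y ^ (-((1:ℝ)/3)) :=
    Real.one_le_rpow_of_pos_of_le_one_of_nonpos hY hY1.le (by norm_num)
  have e7 : u ^ (-((7:ℝ)/5)) = u⁻¹ * u ^ (-((2:ℝ)/5)) := by
    rw [show -((7:ℝ)/5) = -1 + -((2:ℝ)/5) by norm_num, Real.rpow_add hupos,
      Real.rpow_neg_one]
  have e4 : Y ^ ((4:ℝ)/3) = t * Y ^ (-((1:ℝ)/3)) := by
    rw [ht, ← Real.rpow_add hY]; norm_num
  have key : G''fun Y =
      1/5 + (u ^ (-((2:ℝ)/5)) * Y ^ (-((1:ℝ)/3))) * ((4/15) * (t * u⁻¹) - 2/3) := by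
    unfold G''fun
    rw [← ht, ← hudef, e7, e4]; ring
  have htu : t * u⁻¹ ≤ 1 := by
    rw [mul_inv_le_iff₀ hupos, one_mul, hudef]; linarith
  have hbr : (4:ℝ)/15 * (t * u⁻¹) - 2/3 ≤ -(2/5) := by
    have h0 : 0 ≤ t * u⁻¹ := by positivity
    nlinarith
  have hab : (1:ℝ) ≤ u ^ (-((2:ℝ)/5)) * Y ^ (-((1:ℝ)/3)) := by nlinarith
  rw [key]
  nlinarith [mul_le_mul_of_nonneg_right hab (by linarith : (0:ℝ) ≤ -( (4/15) * (t * u⁻¹) - 2/3))]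

/-- For every `Y ∈ (0,1)` the second derivative of `G` is `G''` as above, and it satisfies
`G''(Y) ≤ 1/2 - 2/3 < 0`; in particular `G` is strictly concave on `(0,1)`. -/
theorem stmt13 :
    (∀ Y ∈ Set.Ioo (0 : ℝ) 1,
      HasDerivAt Gfun (G'fun Y) Y ∧
      HasDerivAt G'fun (G''fun Y) Y ∧
      G''fun Y ≤ 1 / 2 - 2 / 3) ∧
    ((1 : ℝ) / 2 - 2 / 3 < 0) ∧
    StrictConcaveOn ℝ (Set.Ioo (0 : ℝ) 1) Gfun := by
  refine ⟨fun Y hY => ⟨hG hY.1, hG' hY.1, hIneq hY.1 hY.2⟩, by norm_num, ?_⟩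
  apply strictConcaveOn_of_deriv2_neg (convex_Ioo 0 1)
  · intro x hx
    exact ((hG hx.1).differentiableAt.continuousAt).continuousWithinAt
  · intro x hx
    rw [interior_Ioo] at hx
    have hd1 : deriv Gfun =ᶠ[nhds x] G'fun := by
      filter_upwards [Ioo_mem_nhds hx.1 hx.2] with y hy
      exact (hG hy.1).deriv
    have : deriv^[2] Gfun x = deriv (deriv Gfun) x := rfl
    rw [this, Filter.EventuallyEq.deriv_eq hd1, (hG' hx.1).deriv]
    have := hIneq hx.1 hx.2
    linarith
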